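/- Theorem 2(i) (strong consistency of the plug-in estimator): let V be a finite set, p a positive probability mass function on {0,1}^V, and X^(1), X^(2), … an i.i.d. sequence of random elements of {0,1}^V distributed according to p. For D ⊆ V let θ_D = ∑_{D' ⊆ D} (−1)^{|D ∖ D'|} log p(𝟙_{D'}) and define the estimator θ̂^(n)_D = ∑_{D' ⊆ D} (−1)^{|D ∖ D'|} log p̂^(n)_{D'}, where p̂^(n)_{D'} = (1/n) ∑_{i=1}^n 𝟙(X^(i) = 𝟙_{D'}) (with log 0 interpreted by the total extension of the real logarithm). Then for every D ⊆ V, θ̂^(n)_D → θ_D almost surely as n → ∞. -/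

import Mathlib

open MeasureTheory Filter

section Aux

variable {Ω : Type*} [MeasurableSpace Ω] {ℙ : Measure Ω} [IsProbabilityMeasure ℙ]

/-- If the outer measures of a set and its complement sum to at most 1 in a probability
space, the set is null measurable. -/
lemma nullMeasurableSet_of_compl_le {A : Set Ω} (h : ℙ A + ℙ Aᶜ ≤ 1) :
    NullMeasurableSet A ℙ := by
  have h1 : (1 : ENNReal) ≤ ℙ A + ℙ Aᶜ := by
    calc (1 : ENNReal) = ℙ (A ∪ Aᶜ) := by simp
    _ ≤ ℙ A + ℙ Aᶜ := measure_union_le _ _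
  have heq : ℙ A + ℙ Aᶜ = 1 := le_antisymm h h1
  set B := toMeasurable ℙ A with hB
  set C := toMeasurable ℙ Aᶜ with hC
  have hBC : B ∪ C = Set.univ := by
    apply Set.eq_univ_of_univ_subset
    intro ω _
    by_cases hω : ω ∈ A
    · exact Or.inl (subset_toMeasurable ℙ A hω)
    · exact Or.inr (subset_toMeasurable ℙ Aᶜ hω)
  have hint : ℙ (B ∩ C) = 0 := by
    have := measure_union_add_inter (μ := ℙ) B (measurableSet_toMeasurable ℙ Aᶜ)
    rw [hBC, measure_univ, measure_toMeasurable, measure_toMeasurable, heq] at this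
    have this2 : 1 + ℙ (B ∩ C) = 1 + 0 := by rw [add_zero]; exact this
    exact (ENNReal.add_right_inj ENNReal.one_ne_top).mp this2
  have hBA : ℙ (B \ A) = 0 := by
    apply measure_mono_null _ hint
    intro ω hω
    exact ⟨hω.1, subset_toMeasurable ℙ Aᶜ hω.2⟩
  have hae : A =ᵐ[ℙ] B := by
    rw [MeasureTheory.ae_eq_set]
    constructor
    · apply measure_mono_null _ (measure_empty (μ := ℙ))
      intro ω hω; exact hω.2 (subset_toMeasurable ℙ A hω.1)
    · exact hBA
  exact ((measurableSet_toMeasurable ℙ A).nullMeasurableSet).congr hae.symm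

/-- Strong law of large numbers for empirical frequencies of a finite-valued i.i.d. sequence. -/
lemma empirical_freq_tendsto {α : Type*} [Fintype α] [DecidableEq α]
    (p : α → ℝ) (hp : ∀ x, 0 < p x) (hsum : ∑ x : α, p x = 1)
    (X : ℕ → Ω → α)
    (hindep : ProbabilityTheory.iIndepFun (m := fun _ : ℕ => (⊤ : MeasurableSpace α)) X ℙ)
    (hdist : ∀ n : ℕ, ∀ x : α, ℙ {ω | X n ω = x} = ENNReal.ofReal (p x))
    (x : α) :
    ∀ᵐ ω ∂ℙ, Tendsto
      (fun n : ℕ => (∑ i ∈ Finset.range n, (if X i ω = x then (1 : ℝ) else 0)) / n)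
      atTop (nhds (p x)) := by
  classical
  have hle : p x ≤ 1 := by
    rw [← hsum]
    exact Finset.single_le_sum (fun y _ => (hp y).le) (Finset.mem_univ x)
  set A : ℕ → Set Ω := fun i => {ω | X i ω = x} with hA
  have hmeasA : ∀ i, ℙ (A i) = ENNReal.ofReal (p x) := fun i => hdist i x
  -- the complement is the union over all other values
  have hcompl_le : ∀ i, ℙ (A i)ᶜ ≤ ENNReal.ofReal (1 - p x) := by
    intro i
    have hsub : (A i)ᶜ ⊆ ⋃ y ∈ Finset.univ.erase x, {ω | X i ω = y} := by
      intro ω hω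
      simp only [Set.mem_iUnion]
      exact ⟨X i ω, Finset.mem_erase.2 ⟨hω, Finset.mem_univ _⟩, rfl⟩
    calc ℙ (A i)ᶜ ≤ ℙ (⋃ y ∈ Finset.univ.erase x, {ω | X i ω = y}) := measure_mono hsub
    _ ≤ ∑ y ∈ Finset.univ.erase x, ℙ {ω | X i ω = y} := measure_biUnion_finset_le _ _
    _ = ∑ y ∈ Finset.univ.erase x, ENNReal.ofReal (p y) := by
        exact Finset.sum_congr rfl fun y _ => hdist i y
    _ = ENNReal.ofReal (∑ y ∈ Finset.univ.erase x, p y) := by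
        rw [ENNReal.ofReal_sum_of_nonneg (fun y _ => (hp y).le)]
    _ = ENNReal.ofReal (1 - p x) := by
        rw [Finset.sum_erase_eq_sub (Finset.mem_univ x), hsum]
  have hsum_le : ∀ i, ℙ (A i) + ℙ (A i)ᶜ ≤ 1 := by
    intro i
    calc ℙ (A i) + ℙ (A i)ᶜ ≤ ENNReal.ofReal (p x) + ENNReal.ofReal (1 - p x) := by
          exact add_le_add (le_of_eq (hmeasA i)) (hcompl_le i)
    _ = ENNReal.ofReal (p x + (1 - p x)) := by
          rw [ENNReal.ofReal_add (hp x).le (by linarith)]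
    _ = 1 := by norm_num
  have hnull : ∀ i, NullMeasurableSet (A i) ℙ := fun i => nullMeasurableSet_of_compl_le (hsum_le i)
  have hmeasAc : ∀ i, ℙ (A i)ᶜ = ENNReal.ofReal (1 - p x) := by
    intro i
    rw [measure_compl₀ (hnull i) (measure_ne_top ℙ _), measure_univ, hmeasA i,
      ENNReal.ofReal_sub 1 (hp x).le, ENNReal.ofReal_one]
  -- the indicator random variables
  set Y : ℕ → Ω → ℝ := fun i ω => if X i ω = x then (1 : ℝ) else 0 with hY
  have hYind : ∀ i, Y i = (A i).indicator (fun _ => (1 : ℝ)) := by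
    intro i; funext ω
    simp only [hY, Set.indicator_apply]
    rfl
  -- a.e. equal measurable versions
  set g : ℕ → Ω → ℝ := fun i => (toMeasurable ℙ (A i)).indicator (fun _ => (1 : ℝ)) with hg
  have hAae : ∀ i, A i =ᵐ[ℙ] toMeasurable ℙ (A i) := fun i =>
    (NullMeasurableSet.toMeasurable_ae_eq (hnull i)).symm
  have hYae : ∀ i, Y i =ᵐ[ℙ] g i := by
    intro i
    filter_upwards [Filter.eventuallyEq_set.1 (hAae i)] with ω hω
    rw [hYind]
    simp only [hg, Set.indicator_apply]
    exact if_congr hω rfl rfl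
  have hgmeas : ∀ i, Measurable (g i) := fun i =>
    (measurable_const).indicator (measurableSet_toMeasurable ℙ (A i))
  have hYaemeas : ∀ i, AEMeasurable (Y i) ℙ := fun i =>
    ⟨g i, hgmeas i, hYae i⟩
  -- preimage computation
  have hpre : ∀ i (s : Set ℝ),
      ℙ (Y i ⁻¹' s) = (if (1 : ℝ) ∈ s then ENNReal.ofReal (p x) else 0)
        + (if (0 : ℝ) ∈ s then ENNReal.ofReal (1 - p x) else 0) := by
    intro i s
    by_cases h1 : (1 : ℝ) ∈ s <;> by_cases h0 : (0 : ℝ) ∈ s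
    · have : Y i ⁻¹' s = Set.univ := by
        ext ω; simp only [Set.mem_preimage, Set.mem_univ, iff_true, hY]
        split_ifs <;> assumption
      rw [this, measure_univ, if_pos h1, if_pos h0,
        ← ENNReal.ofReal_add (hp x).le (by linarith)]
      norm_num
    · have : Y i ⁻¹' s = A i := by
        ext ω; simp only [Set.mem_preimage, hY, hA, Set.mem_setOf_eq]
        split_ifs with h <;> simp [h, h1, h0]
      rw [this, hmeasA i, if_pos h1, if_neg h0, add_zero]
    · have : Y i ⁻¹' s = (A i)ᶜ := by
        ext ω; simp only [Set.mem_preimage, hY, hA, Set.mem_compl_iff, Set.mem_setOf_eq]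
        split_ifs with h <;> simp [h, h1, h0]
      rw [this, hmeasAc i, if_neg h1, if_pos h0, zero_add]
    · have : Y i ⁻¹' s = ∅ := by
        ext ω; simp only [Set.mem_preimage, Set.mem_empty_iff_false, iff_false, hY]
        split_ifs <;> assumption
      rw [this, measure_empty, if_neg h1, if_neg h0, add_zero]
  -- identically distributed
  have hident : ∀ i, ProbabilityTheory.IdentDistrib (Y i) (Y 0) ℙ ℙ := by
    intro i
    refine ⟨hYaemeas i, hYaemeas 0, ?_⟩
    apply Measure.ext
    intro s hs
    rw [Measure.map_apply_of_aemeasurable (hYaemeas i) hs,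
      Measure.map_apply_of_aemeasurable (hYaemeas 0) hs, hpre i s, hpre 0 s]
  -- pairwise independence
  have hindep' : Pairwise (Function.onFun (ProbabilityTheory.IndepFun · · ℙ) Y) := by
    have hcomp := hindep.comp (fun _ (y : α) => if y = x then (1 : ℝ) else 0)
      (fun _ => measurable_from_top)
    intro i j hij
    exact hcomp.indepFun hij
  -- integrability
  have hint : Integrable (Y 0) ℙ := by
    refine Integrable.congr ?_ (hYae 0).symm
    exact (integrable_const (1 : ℝ)).indicator (measurableSet_toMeasurable ℙ (A 0))
  -- the expectation
  have hexp : ∫ ω, Y 0 ω ∂ℙ = p x := by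
    rw [integral_congr_ae (hYae 0)]
    simp only [hg]
    rw [integral_indicator_const (1 : ℝ) (measurableSet_toMeasurable ℙ (A 0)),
      measureReal_def, measure_toMeasurable, hmeasA 0, ENNReal.toReal_ofReal (hp x).le, smul_eq_mul, mul_one]
  have := ProbabilityTheory.strong_law_ae_real Y hint hindep' hident
  rw [hexp] at this
  exact this

end Aux

/-- Theorem 2(i) (strong consistency of the plug-in estimator): for an i.i.d. sample
`X⁽¹⁾, X⁽²⁾, …` from a positive pmf `p` on `{0,1}^V`, the plug-in estimator
`θ̂ⁿ_D = ∑_{D' ⊆ D} (-1)^{|D \ D'|} log p̂ⁿ_{D'}` converges almost surely to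
`θ_D = ∑_{D' ⊆ D} (-1)^{|D \ D'|} log p (𝟙_{D'})`. -/
theorem plugin_estimator_strongly_consistent
    {V : Type*} [Fintype V] [DecidableEq V]
    {Ω : Type*} [MeasurableSpace Ω] (ℙ : Measure Ω) [IsProbabilityMeasure ℙ]
    (p : (V → Bool) → ℝ) (hp : ∀ x, 0 < p x) (hsum : ∑ x : V → Bool, p x = 1)
    (X : ℕ → Ω → (V → Bool))
    (hindep : ProbabilityTheory.iIndepFun
      (m := fun _ : ℕ => (⊤ : MeasurableSpace (V → Bool))) X ℙ)
    (hdist : ∀ n : ℕ, ∀ x : V → Bool, ℙ {ω | X n ω = x} = ENNReal.ofReal (p x))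
    (D : Finset V)
    (θ : ℝ)
    (hθ : θ = ∑ D' ∈ D.powerset,
      (-1 : ℝ) ^ ((D \ D').card) * Real.log (p (fun v => decide (v ∈ D'))))
    (θhat : ℕ → Ω → ℝ)
    (hθhat : ∀ n ω, θhat n ω = ∑ D' ∈ D.powerset,
      (-1 : ℝ) ^ ((D \ D').card) *
        Real.log ((n : ℝ)⁻¹ *
          ∑ i ∈ Finset.range n,
            (if X i ω = (fun v => decide (v ∈ D')) then (1 : ℝ) else 0))) :
    ∀ᵐ ω ∂ℙ, Tendsto (fun n : ℕ => θhat n ω) atTop (nhds θ) := by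
  have H : ∀ᵐ ω ∂ℙ, ∀ D' : Finset V, Tendsto
      (fun n : ℕ => (∑ i ∈ Finset.range n,
        (if X i ω = (fun v => decide (v ∈ D')) then (1 : ℝ) else 0)) / n)
      atTop (nhds (p (fun v => decide (v ∈ D')))) := by
    rw [ae_all_iff]
    intro D'
    exact empirical_freq_tendsto p hp hsum X hindep hdist _
  filter_upwards [H] with ω hω
  have hfun : (fun n : ℕ => θhat n ω) = fun n : ℕ => ∑ D' ∈ D.powerset,
      (-1 : ℝ) ^ ((D \ D').card) *
        Real.log ((n : ℝ)⁻¹ *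
          ∑ i ∈ Finset.range n,
            (if X i ω = (fun v => decide (v ∈ D')) then (1 : ℝ) else 0)) := by
    funext n; exact hθhat n ω
  rw [hfun, hθ]
  apply tendsto_finset_sum
  intro D' _
  apply Tendsto.const_mul
  have h1 : Tendsto (fun n : ℕ => (n : ℝ)⁻¹ *
      ∑ i ∈ Finset.range n,
        (if X i ω = (fun v => decide (v ∈ D')) then (1 : ℝ) else 0))
      atTop (nhds (p (fun v => decide (v ∈ D')))) := by
    have := hω D'
    simpa only [div_eq_inv_mul] using this
  exact ((Real.continuousAt_log (hp _).ne').tendsto.comp h1)
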